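/- Let A be the KL×KL adjacency matrix of the 'spider' graph with K legs of L nodes each, whose block tridiagonal form has diagonal blocks B, 0, ..., 0 and identity off-diagonal blocks, where B is the star pattern matrix (B_{0j} = B_{j0} = 1 for 1 ≤ j < K, else 0). Then det(x·I − A) equals, up to sign, U_L(x/2)^{K-2}·(U_L(x/2) + √(K−1)·U_{L-1}(x/2))·(U_L(x/2) − √(K−1)·U_{L-1}(x/2)), where U_n are Chebyshev polynomials of the second kind. -/

import Mathlib

open Polynomial

section SpiderAux
open Matrix
def Tm (x lam : ℂ) (n : ℕ) : Matrix (Fin n) (Fin n) ℂ :=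
  Matrix.of fun i j =>
    if (i : ℕ) = (j : ℕ) then (if (i : ℕ) = 0 then x - lam else x)
    else if (j : ℕ) = (i : ℕ) + 1 ∨ (i : ℕ) = (j : ℕ) + 1 then -1 else 0

lemma succAbove_one_val (n : ℕ) (j : Fin (n + 1)) :
    (((1 : Fin (n + 2)).succAbove j) : ℕ) = if (j : ℕ) = 0 then 0 else (j : ℕ) + 1 := by
  rw [Fin.succAbove]
  split_ifs with h h' h' <;>
    simp_all [Fin.lt_def, Fin.val_one, Fin.coe_castSucc, Fin.val_succ] <;> omega

lemma Tm_sub1 (x lam : ℂ) (n : ℕ) :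
    (Tm x lam (n + 1)).submatrix Fin.succ Fin.succ = Tm x 0 n := by
  ext i j
  simp only [Tm, submatrix_apply, of_apply, Fin.val_succ]
  split_ifs <;> first | (exfalso; omega) | tauto | ring

lemma detC (x lam : ℂ) (n : ℕ) :
    ((Tm x lam (n + 2)).submatrix Fin.succ ((1 : Fin (n + 2)).succAbove)).det
      = - (Tm x 0 n).det := by
  rw [det_succ_column_zero, Fin.sum_univ_succ]
  have h1 : ∀ i : Fin n,
      (Tm x lam (n + 2)).submatrix Fin.succ ((1 : Fin (n + 2)).succAbove) i.succ 0 = 0 := by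
    intro i
    simp only [Tm, submatrix_apply, of_apply, Fin.val_succ, succAbove_one_val]
    split_ifs <;> (try simp_all only [false_or, or_false]) <;>
      first | (exfalso; omega) | tauto | ring
  have h0 : (Tm x lam (n + 2)).submatrix Fin.succ ((1 : Fin (n + 2)).succAbove) 0 0 = -1 := by
    simp only [Tm, submatrix_apply, of_apply, Fin.val_succ, succAbove_one_val]
    norm_num
  have h2 : ((Tm x lam (n + 2)).submatrix Fin.succ
      ((1 : Fin (n + 2)).succAbove)).submatrix ((0 : Fin (n + 1)).succAbove) Fin.succ
      = Tm x 0 n := by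
    ext i j
    simp only [Fin.succAbove_zero, submatrix_apply, Tm, of_apply, Fin.val_succ,
      succAbove_one_val]
    split_ifs <;> first | (exfalso; omega) | tauto | ring
  rw [h0, h2]
  rw [Finset.sum_eq_zero (fun i _ => by rw [h1 i]; ring)]
  norm_num

lemma det_Tm_expand (x lam : ℂ) (n : ℕ) :
    (Tm x lam (n + 2)).det
      = (x - lam) * (Tm x 0 (n + 1)).det - (Tm x 0 n).det := by
  rw [det_succ_row_zero, Fin.sum_univ_succ, Fin.sum_univ_succ]
  have hrest : ∀ j : Fin n, (Tm x lam (n + 2)) 0 j.succ.succ = 0 := by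
    intro j
    simp only [Tm, of_apply, Fin.val_succ, Fin.val_zero]
    norm_num
  have h00 : (Tm x lam (n + 2)) 0 0 = x - lam := by
    simp [Tm]
  have h01 : (Tm x lam (n + 2)) 0 ((0 : Fin (n + 1)).succ) = -1 := by
    simp [Tm, Fin.val_succ]
  rw [Finset.sum_eq_zero (fun j _ => by rw [hrest j]; ring), h00, h01,
    Fin.succAbove_zero, Tm_sub1]
  have hsA : ((0 : Fin (n + 1)).succ) = (1 : Fin (n + 2)) := rfl
  rw [hsA, detC]
  simp
  ring

noncomputable def chebU (x : ℂ) (n : ℕ) : ℂ := (Polynomial.Chebyshev.U ℂ (n : ℤ)).eval (x / 2)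

lemma chebU_zero (x : ℂ) : chebU x 0 = 1 := by
  simp [chebU, Polynomial.Chebyshev.U_zero]

lemma chebU_one (x : ℂ) : chebU x 1 = x := by
  rw [chebU, Nat.cast_one, Polynomial.Chebyshev.U_one]
  simp only [eval_mul, eval_ofNat, eval_X]
  ring

lemma chebU_rec (x : ℂ) (n : ℕ) : chebU x (n + 2) = x * chebU x (n + 1) - chebU x n := by
  have h : ((n + 2 : ℕ) : ℤ) = (n : ℤ) + 2 := by push_cast; ring
  have h1 : ((n + 1 : ℕ) : ℤ) = (n : ℤ) + 1 := by push_cast; ring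
  rw [chebU, chebU, chebU, h, h1, Polynomial.Chebyshev.U_add_two]
  simp only [eval_sub, eval_mul, eval_ofNat, eval_X]
  ring

lemma det_Tm_zero (x : ℂ) : ∀ n, (Tm x 0 n).det = chebU x n := by
  intro n
  induction n using Nat.twoStepInduction with
  | zero => rw [Matrix.det_fin_zero, chebU_zero]
  | one =>
      rw [Matrix.det_fin_one, chebU_one]
      simp [Tm]
  | more n ih1 ih2 =>
      rw [det_Tm_expand, ih1, ih2, chebU_rec]
      ring

lemma det_Tm (x lam : ℂ) (n : ℕ) :
    (Tm x lam (n + 1)).det = chebU x (n + 1) - lam * chebU x n := by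
  cases n with
  | zero =>
      rw [Matrix.det_fin_one, chebU_one, chebU_zero]
      simp [Tm]
  | succ m =>
      rw [det_Tm_expand, det_Tm_zero, det_Tm_zero, chebU_rec]
      ring


/-- The eigenvector matrix for the star pattern matrix. -/
noncomputable def Pm (K : ℕ) (s : ℂ) : Matrix (Fin (K + 2)) (Fin (K + 2)) ℂ :=
  Matrix.of fun m l =>
    if l = 0 then (if m = 0 then s else 1)
    else if l = 1 then (if m = 0 then -s else 1)
    else if m = 1 then 1 else if m = l then -1 else 0

noncomputable def lamv (K : ℕ) (s : ℂ) : Fin (K + 2) → ℂ :=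
  fun k => if k = 0 then s else if k = 1 then -s else 0

section star
variable (K'' : ℕ) (s : ℂ)

lemma Pm_col_sum (l : Fin (K'' + 2)) :
    ∑ m, Pm K'' s m l =
      if l = 0 then s + (K'' + 1) else if l = 1 then -s + (K'' + 1) else 0 := by
  by_cases h0 : l = 0
  · subst h0
    have : ∀ m : Fin (K'' + 2), Pm K'' s m 0
        = (if m = 0 then s - 1 else 0) + 1 := by
      intro m; simp only [Pm, of_apply, if_pos rfl]
      split_ifs <;> ring
    rw [Finset.sum_congr rfl fun m _ => this m, Finset.sum_add_distrib,
      Finset.sum_ite_eq' Finset.univ 0 (fun _ => s - 1)]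
    simp [Finset.card_univ]
    ring
  · by_cases h1 : l = 1
    · subst h1
      have : ∀ m : Fin (K'' + 2), Pm K'' s m 1
          = (if m = 0 then -s - 1 else 0) + 1 := by
        intro m
        simp only [Pm, of_apply]
        have : (1 : Fin (K'' + 2)) ≠ 0 := by simp [Fin.ext_iff]
        split_ifs <;> first | tauto | ring
      rw [Finset.sum_congr rfl fun m _ => this m, Finset.sum_add_distrib,
        Finset.sum_ite_eq' Finset.univ 0 (fun _ => -s - 1)]
      simp [Finset.card_univ]
      ring
    · have : ∀ m : Fin (K'' + 2), Pm K'' s m l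
          = (if m = 1 then 1 else 0) + (if m = l then -1 else 0) := by
        intro m
        simp only [Pm, of_apply, if_neg h0, if_neg h1]
        by_cases hm1 : m = 1
        · subst hm1
          rw [if_pos rfl, if_pos rfl, if_neg (fun h : (1 : Fin (K'' + 2)) = l => h1 h.symm)]
          ring
        · by_cases hml : m = l
          · simp [hm1, hml, h1]
          · simp [hm1, hml, h1]
      rw [Finset.sum_congr rfl fun m _ => this m, Finset.sum_add_distrib]
      simp [Finset.sum_ite_eq', if_neg h0, if_neg h1]

lemma Pm_eigen (B : Matrix (Fin (K'' + 2)) (Fin (K'' + 2)) ℂ)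
    (hB : ∀ i j : Fin (K'' + 2),
      B i j = if ((i : ℕ) = 0 ∧ (j : ℕ) ≠ 0) ∨ ((j : ℕ) = 0 ∧ (i : ℕ) ≠ 0) then 1 else 0)
    (hs : s * s = (K'' : ℂ) + 1) (k l : Fin (K'' + 2)) :
    ∑ m, B k m * Pm K'' s m l = Pm K'' s k l * lamv K'' s l := by
  have hB' : ∀ i j : Fin (K'' + 2),
      B i j = if i = 0 then (if j = 0 then 0 else 1) else (if j = 0 then 1 else 0) := by
    intro i j
    rw [hB i j]
    have hi : (i : ℕ) = 0 ↔ i = 0 := Fin.val_eq_zero_iff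
    have hj : (j : ℕ) = 0 ↔ j = 0 := Fin.val_eq_zero_iff
    split_ifs <;> tauto
  by_cases hk : k = 0
  · subst hk
    have step : ∀ m : Fin (K'' + 2), B 0 m * Pm K'' s m l
        = Pm K'' s m l - (if m = 0 then Pm K'' s m l else 0) := by
      intro m
      rw [hB' 0 m]
      split_ifs <;> first | tauto | ring
    rw [Finset.sum_congr rfl fun m _ => step m, Finset.sum_sub_distrib,
      Finset.sum_ite_eq' Finset.univ (0 : Fin (K'' + 2)) (fun m => Pm K'' s m l),
      Pm_col_sum]
    simp only [Finset.mem_univ, if_true]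
    have h01 : (0 : Fin (K'' + 2)) ≠ 1 := by simp [Fin.ext_iff]
    by_cases h0 : l = 0
    · subst h0
      simp [Pm, lamv, h01]
      linear_combination -hs
    · by_cases h1 : l = 1
      · subst h1
        have h10 : (1 : Fin (K'' + 2)) ≠ 0 := by simp [Fin.ext_iff]
        simp [Pm, lamv, h01, h10]
        linear_combination -hs
      · simp [Pm, lamv, h0, h1, h01, Ne.symm h0]
  · have step : ∀ m : Fin (K'' + 2), B k m * Pm K'' s m l
        = (if m = 0 then Pm K'' s m l else 0) := by
      intro m
      rw [hB' k m]
      split_ifs <;> first | tauto | ring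
    rw [Finset.sum_congr rfl fun m _ => step m,
      Finset.sum_ite_eq' Finset.univ (0 : Fin (K'' + 2)) (fun m => Pm K'' s m l)]
    simp only [Finset.mem_univ, if_true]
    by_cases h0 : l = 0
    · subst h0
      simp [Pm, lamv, hk]
    · by_cases h1 : l = 1
      · subst h1
        have h10 : (1 : Fin (K'' + 2)) ≠ 0 := by simp [Fin.ext_iff]
        simp [Pm, lamv, hk, h10]
      · have h01 : (0 : Fin (K'' + 2)) ≠ 1 := by simp [Fin.ext_iff]
        simp [Pm, lamv, h0, h1, h01, Ne.symm h0]

lemma Pm_det_ne_zero (hs0 : s ≠ 0) : (Pm K'' s).det ≠ 0 := by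
  intro hdet
  obtain ⟨c, hc0, hc⟩ := (Matrix.exists_mulVec_eq_zero_iff).mpr hdet
  have h01 : (0 : Fin (K'' + 2)) ≠ 1 := by simp [Fin.ext_iff]
  have hcomp : ∀ m, ∑ l, Pm K'' s m l * c l = 0 := by
    intro m
    have := congrFun hc m
    simpa [Matrix.mulVec, dotProduct] using this
  -- component 0 : `s * c 0 - s * c 1 = 0`
  have e0 : s * c 0 + (-s) * c 1 = 0 := by
    have step : ∀ l : Fin (K'' + 2), Pm K'' s 0 l * c l
        = (if l = 0 then s * c l else 0) + (if l = 1 then (-s) * c l else 0) := by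
      intro l
      by_cases hl0 : l = 0
      · subst hl0; simp [Pm, h01]
      · by_cases hl1 : l = 1
        · subst hl1; simp [Pm, h01]
        · simp [Pm, hl0, hl1, Ne.symm hl0, h01]
    have := hcomp 0
    rwa [Finset.sum_congr rfl fun l _ => step l, Finset.sum_add_distrib,
      Finset.sum_ite_eq' Finset.univ (0 : Fin (K'' + 2)) (fun l => s * c l),
      Finset.sum_ite_eq' Finset.univ (1 : Fin (K'' + 2)) (fun l => (-s) * c l),
      if_pos (Finset.mem_univ _), if_pos (Finset.mem_univ _)] at this
  have hc01 : c 0 = c 1 := by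
    have h : s * (c 0 - c 1) = 0 := by linear_combination e0
    rcases mul_eq_zero.mp h with h | h
    · exact absurd h hs0
    · linear_combination h
  -- component 1 : `∑ l, c l = 0`
  have e1 : ∑ l, c l = 0 := by
    have step : ∀ l : Fin (K'' + 2), Pm K'' s 1 l * c l = c l := by
      intro l
      by_cases hl0 : l = 0
      · subst hl0; simp [Pm, Ne.symm h01]
      · by_cases hl1 : l = 1
        · subst hl1; simp [Pm, Ne.symm h01]
        · simp [Pm, hl0, hl1]
    have := hcomp 1
    rwa [Finset.sum_congr rfl fun l _ => step l] at this
  -- components m ≥ 2 : `c 0 + c 1 - c m = 0`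
  have em : ∀ m : Fin (K'' + 2), m ≠ 0 → m ≠ 1 → c m = c 0 + c 1 := by
    intro m hm0 hm1
    have step : ∀ l : Fin (K'' + 2), Pm K'' s m l * c l
        = (if l = 0 then c l else 0) + (if l = 1 then c l else 0)
          + (if l = m then -(c l) else 0) := by
      intro l
      by_cases hl0 : l = 0
      · subst hl0; simp [Pm, hm0, Ne.symm hm0, h01]
      · by_cases hl1 : l = 1
        · subst hl1; simp [Pm, hm0, hm1, Ne.symm hm1, h01]
        · by_cases hlm : l = m
          · subst hlm; simp [Pm, hl0, hl1, hm0, hm1]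
          · simp [Pm, hl0, hl1, hlm, Ne.symm hlm, hm1]
    have h := hcomp m
    rw [Finset.sum_congr rfl fun l _ => step l, Finset.sum_add_distrib,
      Finset.sum_add_distrib,
      Finset.sum_ite_eq' Finset.univ (0 : Fin (K'' + 2)) (fun l => c l),
      Finset.sum_ite_eq' Finset.univ (1 : Fin (K'' + 2)) (fun l => c l),
      Finset.sum_ite_eq' Finset.univ m (fun l => -(c l)),
      if_pos (Finset.mem_univ _), if_pos (Finset.mem_univ _),
      if_pos (Finset.mem_univ _)] at h
    linear_combination -h
  -- conclude `c 0 = 0`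
  have hsum : ∀ l : Fin (K'' + 2), c l
      = 2 * c 0 - (if l = 0 then c 0 else 0) - (if l = 1 then c 0 else 0) := by
    intro l
    by_cases hl0 : l = 0
    · subst hl0
      rw [if_pos rfl, if_neg h01]
      ring
    · by_cases hl1 : l = 1
      · subst hl1
        rw [if_neg (Ne.symm h01), if_pos rfl, ← hc01]
        ring
      · rw [em l hl0 hl1, if_neg hl0, if_neg hl1, ← hc01]
        ring
  have hcard : (Finset.univ : Finset (Fin (K'' + 2))).card = K'' + 2 := by simp
  have hz : (2 * (K'' + 2 : ℂ)) * c 0 - c 0 - c 0 = 0 := by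
    have := e1
    rw [Finset.sum_congr rfl fun l _ => hsum l] at this
    rw [Finset.sum_sub_distrib, Finset.sum_sub_distrib, Finset.sum_const,
      Finset.sum_ite_eq' Finset.univ (0 : Fin (K'' + 2)) (fun _ => c 0),
      Finset.sum_ite_eq' Finset.univ (1 : Fin (K'' + 2)) (fun _ => c 0),
      if_pos (Finset.mem_univ _), if_pos (Finset.mem_univ _), hcard] at this
    push_cast at this ⊢
    linear_combination this
  have hc00 : c 0 = 0 := by
    have h2 : (2 * (K'' + 2 : ℂ) - 2) * c 0 = 0 := by linear_combination hz
    have hne : (2 * (K'' + 2 : ℂ) - 2) ≠ 0 := by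
      have h2K : ((2 * K'' + 2 : ℕ) : ℂ) ≠ 0 := Nat.cast_ne_zero.mpr (by omega)
      intro h
      apply h2K
      push_cast
      linear_combination h
    exact (mul_eq_zero.mp h2).resolve_left hne
  apply hc0
  funext l
  by_cases hl0 : l = 0
  · subst hl0; simpa using hc00
  · by_cases hl1 : l = 1
    · subst hl1
      simp [← hc01, hc00]
    · simp [em l hl0 hl1, hc00, ← hc01]

end star


end SpiderAux

/-- the characteristic determinant of the spider graph adjacency matrix
factors, up to sign, as
`U_L(x/2)^(K−2) · (U_L(x/2) + √(K−1)·U_{L−1}(x/2)) · (U_L(x/2) − √(K−1)·U_{L−1}(x/2))`. -/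
theorem spider_charpoly_factorization
    (K L : ℕ) (hK : 2 ≤ K) (hL : 0 < L)
    (B : Matrix (Fin K) (Fin K) ℂ)
    (hB : ∀ i j : Fin K,
      B i j = if ((i : ℕ) = 0 ∧ (j : ℕ) ≠ 0) ∨ ((j : ℕ) = 0 ∧ (i : ℕ) ≠ 0) then 1 else 0)
    (A : Matrix (Fin L × Fin K) (Fin L × Fin K) ℂ)
    (hA : ∀ (i j : Fin L) (k l : Fin K),
      A (i, k) (j, l) =
        if (i : ℕ) = (j : ℕ) then (if (i : ℕ) = 0 then B k l else 0)
        else if (j : ℕ) = (i : ℕ) + 1 ∨ (i : ℕ) = (j : ℕ) + 1 then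
          (1 : Matrix (Fin K) (Fin K) ℂ) k l
        else 0) :
    ∃ ε : ℂ, (ε = 1 ∨ ε = -1) ∧ ∀ x : ℂ,
      (x • (1 : Matrix (Fin L × Fin K) (Fin L × Fin K) ℂ) - A).det =
        ε * ((Polynomial.Chebyshev.U ℂ (L : ℤ)).eval (x / 2)) ^ (K - 2) *
          (((Polynomial.Chebyshev.U ℂ (L : ℤ)).eval (x / 2) +
              (Real.sqrt ((K : ℝ) - 1) : ℂ) *
                (Polynomial.Chebyshev.U ℂ ((L : ℤ) - 1)).eval (x / 2)) *
            ((Polynomial.Chebyshev.U ℂ (L : ℤ)).eval (x / 2) -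
              (Real.sqrt ((K : ℝ) - 1) : ℂ) *
                (Polynomial.Chebyshev.U ℂ ((L : ℤ) - 1)).eval (x / 2))) := by
  obtain ⟨K'', rfl⟩ : ∃ K'', K = K'' + 2 := ⟨K - 2, by omega⟩
  obtain ⟨L', rfl⟩ : ∃ L', L = L' + 1 := ⟨L - 1, by omega⟩
  set s : ℂ := ((Real.sqrt (((K'' + 2 : ℕ) : ℝ) - 1) : ℝ) : ℂ) with hs_def
  have hsq : s * s = (K'' : ℂ) + 1 := by
    rw [hs_def, ← Complex.ofReal_mul,
      Real.mul_self_sqrt (by push_cast; linarith)]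
    push_cast
    ring
  have hs0 : s ≠ 0 := by
    rw [hs_def, Complex.ofReal_ne_zero]
    refine (Real.sqrt_ne_zero'.mpr ?_)
    push_cast
    linarith
  refine ⟨1, Or.inl rfl, fun x => ?_⟩
  classical
  set P : Matrix (Fin (K'' + 2)) (Fin (K'' + 2)) ℂ := Pm K'' s with hP
  set N : Matrix (Fin (L' + 1) × Fin (K'' + 2)) (Fin (L' + 1) × Fin (K'' + 2)) ℂ :=
    Matrix.blockDiagonal (fun k : Fin (K'' + 2) => Tm x (lamv K'' s k) (L' + 1)) with hN
  set Qd : Matrix (Fin (L' + 1) × Fin (K'' + 2)) (Fin (L' + 1) × Fin (K'' + 2)) ℂ :=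
    Matrix.of (fun p q => if p.1 = q.1 then P p.2 q.2 else 0) with hQd
  -- determinant of Qd
  have hQd_eq : Qd = (Matrix.blockDiagonal (fun _ : Fin (L' + 1) => P)).submatrix
      (Equiv.prodComm (Fin (L' + 1)) (Fin (K'' + 2)))
      (Equiv.prodComm (Fin (L' + 1)) (Fin (K'' + 2))) := by
    ext ⟨i, k⟩ ⟨j, l⟩
    simp [hQd, Matrix.blockDiagonal_apply]
  have hdetQ : Qd.det ≠ 0 := by
    rw [hQd_eq, Matrix.det_submatrix_equiv_self, Matrix.det_blockDiagonal,
      Finset.prod_const]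
    exact pow_ne_zero _ (Pm_det_ne_zero K'' s hs0)
  -- the key intertwining identity
  have key : (x • (1 : Matrix (Fin (L' + 1) × Fin (K'' + 2))
      (Fin (L' + 1) × Fin (K'' + 2)) ℂ) - A) * Qd = Qd * N := by
    ext ⟨i, k⟩ ⟨j, l⟩
    rw [Matrix.mul_apply, Matrix.mul_apply, Fintype.sum_prod_type,
      Fintype.sum_prod_type]
    have hrhs : ∑ m, ∑ n, Qd (i, k) (m, n) * N (m, n) (j, l)
        = P k l * Tm x (lamv K'' s l) (L' + 1) i j := by
      have h1 : ∀ m, ∑ n, Qd (i, k) (m, n) * N (m, n) (j, l)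
          = if i = m then ∑ n, P k n * N (m, n) (j, l) else 0 := by
        intro m
        by_cases h : i = m
        · subst h
          simp [hQd]
        · simp [hQd, h]
      rw [Finset.sum_congr rfl fun m _ => h1 m,
        Finset.sum_ite_eq Finset.univ i (fun m => ∑ n, P k n * N (m, n) (j, l)),
        if_pos (Finset.mem_univ _)]
      have h2 : ∀ n : Fin (K'' + 2), P k n * N (i, n) (j, l)
          = if n = l then P k n * Tm x (lamv K'' s n) (L' + 1) i j else 0 := by
        intro n
        rw [hN]
        by_cases h : n = l
        · subst h; simp [Matrix.blockDiagonal_apply]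
        · simp [Matrix.blockDiagonal_apply, h]
      rw [Finset.sum_congr rfl fun n _ => h2 n,
        Finset.sum_ite_eq' Finset.univ l
          (fun n => P k n * Tm x (lamv K'' s n) (L' + 1) i j),
        if_pos (Finset.mem_univ _)]
    have hlhs : ∑ m, ∑ n, (x • (1 : Matrix (Fin (L' + 1) × Fin (K'' + 2))
        (Fin (L' + 1) × Fin (K'' + 2)) ℂ) - A) (i, k) (m, n) * Qd (m, n) (j, l)
        = ∑ n, (x • (1 : Matrix (Fin (L' + 1) × Fin (K'' + 2))
            (Fin (L' + 1) × Fin (K'' + 2)) ℂ) - A) (i, k) (j, n) * P n l := by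
      have h1 : ∀ m, ∑ n, (x • (1 : Matrix (Fin (L' + 1) × Fin (K'' + 2))
          (Fin (L' + 1) × Fin (K'' + 2)) ℂ) - A) (i, k) (m, n) * Qd (m, n) (j, l)
          = if m = j then ∑ n, (x • (1 : Matrix (Fin (L' + 1) × Fin (K'' + 2))
            (Fin (L' + 1) × Fin (K'' + 2)) ℂ) - A) (i, k) (m, n) * P n l else 0 := by
        intro m
        by_cases h : m = j
        · subst h; simp [hQd]
        · simp [hQd, h]
      rw [Finset.sum_congr rfl fun m _ => h1 m,
        Finset.sum_ite_eq' Finset.univ j _, if_pos (Finset.mem_univ _)]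
    rw [hlhs, hrhs]
    -- now the entrywise computation
    by_cases hij : (i : ℕ) = (j : ℕ)
    · have hij' : i = j := Fin.ext hij
      subst hij'
      by_cases hi0 : (i : ℕ) = 0
      · -- top block row
        have hentry : ∀ n, (x • (1 : Matrix (Fin (L' + 1) × Fin (K'' + 2))
            (Fin (L' + 1) × Fin (K'' + 2)) ℂ) - A) (i, k) (i, n) * P n l
            = (if n = k then x * P n l else 0) - B k n * P n l := by
          intro n
          rw [Matrix.sub_apply, Matrix.smul_apply, Matrix.one_apply, hA,
            if_pos rfl, if_pos hi0]
          by_cases h : n = k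
          · subst h; simp; try ring
          · have hkn : ¬ k = n := fun hh => h hh.symm
            simp [Prod.ext_iff, h, hkn]; try ring
        rw [Finset.sum_congr rfl fun n _ => hentry n, Finset.sum_sub_distrib,
          Finset.sum_ite_eq' Finset.univ k (fun n => x * P n l),
          if_pos (Finset.mem_univ _), Pm_eigen K'' s B hB hsq k l]
        have hTm : Tm x (lamv K'' s l) (L' + 1) i i = x - lamv K'' s l := by
          simp [Tm, hi0, Fin.val_eq_zero_iff.mp hi0]
        rw [hTm]
        ring
      · have hentry : ∀ n, (x • (1 : Matrix (Fin (L' + 1) × Fin (K'' + 2))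
            (Fin (L' + 1) × Fin (K'' + 2)) ℂ) - A) (i, k) (i, n) * P n l
            = (if n = k then x * P n l else 0) := by
          intro n
          rw [Matrix.sub_apply, Matrix.smul_apply, Matrix.one_apply, hA,
            if_pos rfl, if_neg hi0]
          by_cases h : n = k
          · subst h; simp; try ring
          · have hkn : ¬ k = n := fun hh => h hh.symm
            simp [Prod.ext_iff, h, hkn]; try ring
        rw [Finset.sum_congr rfl fun n _ => hentry n,
          Finset.sum_ite_eq' Finset.univ k (fun n => x * P n l),
          if_pos (Finset.mem_univ _)]
        have hTm : Tm x (lamv K'' s l) (L' + 1) i i = x := by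
          simp [Tm, hi0, mt Fin.val_eq_zero_iff.mpr hi0]
        rw [hTm]
        ring
    · have hij2 : ¬ i = j := fun h => hij (h ▸ rfl)
      by_cases hadj : (j : ℕ) = (i : ℕ) + 1 ∨ (i : ℕ) = (j : ℕ) + 1
      · have hentry : ∀ n, (x • (1 : Matrix (Fin (L' + 1) × Fin (K'' + 2))
            (Fin (L' + 1) × Fin (K'' + 2)) ℂ) - A) (i, k) (j, n) * P n l
            = -(if n = k then P n l else 0) := by
          intro n
          rw [Matrix.sub_apply, Matrix.smul_apply, Matrix.one_apply, hA,
            if_neg hij, if_pos hadj]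
          by_cases h : n = k
          · subst h; simp [Prod.ext_iff, hij2, Matrix.one_apply]; try ring
          · have hkn : ¬ k = n := fun hh => h hh.symm
            simp [Prod.ext_iff, hij2, Matrix.one_apply, h, hkn]; try ring
        rw [Finset.sum_congr rfl fun n _ => hentry n, Finset.sum_neg_distrib,
          Finset.sum_ite_eq' Finset.univ k (fun n => P n l),
          if_pos (Finset.mem_univ _)]
        have hTm : Tm x (lamv K'' s l) (L' + 1) i j = -1 := by
          simp [Tm, hij, hadj]
        rw [hTm]
        ring
      · have hentry : ∀ n, (x • (1 : Matrix (Fin (L' + 1) × Fin (K'' + 2))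
            (Fin (L' + 1) × Fin (K'' + 2)) ℂ) - A) (i, k) (j, n) * P n l
            = 0 := by
          intro n
          rw [Matrix.sub_apply, Matrix.smul_apply, Matrix.one_apply, hA,
            if_neg hij, if_neg hadj]
          simp [Prod.ext_iff, hij2]
        rw [Finset.sum_congr rfl fun n _ => hentry n, Finset.sum_const_zero]
        have hTm : Tm x (lamv K'' s l) (L' + 1) i j = 0 := by
          simp [Tm, hij, hadj]
        rw [hTm]
        ring
  -- take determinants
  have hdets : (x • (1 : Matrix (Fin (L' + 1) × Fin (K'' + 2))
      (Fin (L' + 1) × Fin (K'' + 2)) ℂ) - A).det = N.det := by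
    have h := congrArg Matrix.det key
    rw [Matrix.det_mul, Matrix.det_mul, mul_comm Qd.det N.det] at h
    exact mul_right_cancel₀ hdetQ h
  rw [hdets, hN, Matrix.det_blockDiagonal]
  have hblock : ∀ k : Fin (K'' + 2), (Tm x (lamv K'' s k) (L' + 1)).det
      = chebU x (L' + 1) - lamv K'' s k * chebU x L' := fun k => det_Tm x _ L'
  rw [Finset.prod_congr rfl fun k _ => hblock k]
  -- evaluate the product
  have h01 : (0 : Fin (K'' + 2)) ≠ 1 := by simp [Fin.ext_iff]
  have hmem1 : (1 : Fin (K'' + 2)) ∈ (Finset.univ.erase (0 : Fin (K'' + 2))) :=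
    Finset.mem_erase.mpr ⟨Ne.symm h01, Finset.mem_univ _⟩
  rw [← Finset.mul_prod_erase Finset.univ _ (Finset.mem_univ (0 : Fin (K'' + 2))),
    ← Finset.mul_prod_erase _ _ hmem1]
  have hrest : ∀ k ∈ ((Finset.univ.erase (0 : Fin (K'' + 2))).erase 1),
      chebU x (L' + 1) - lamv K'' s k * chebU x L' = chebU x (L' + 1) := by
    intro k hk
    rw [Finset.mem_erase, Finset.mem_erase] at hk
    obtain ⟨hk1, hk0, -⟩ := hk
    simp [lamv, hk0, hk1]
  rw [Finset.prod_congr rfl hrest, Finset.prod_const]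
  have hcard : ((Finset.univ.erase (0 : Fin (K'' + 2))).erase 1).card = K'' := by
    rw [Finset.card_erase_of_mem hmem1,
      Finset.card_erase_of_mem (Finset.mem_univ _), Finset.card_univ]
    simp
  rw [hcard]
  have hlam0 : lamv K'' s (0 : Fin (K'' + 2)) = s := by simp [lamv]
  have hlam1 : lamv K'' s (1 : Fin (K'' + 2)) = -s := by simp [lamv, Ne.symm h01]
  rw [hlam0, hlam1]
  -- identify Chebyshev evaluations
  have hUL : ((Polynomial.Chebyshev.U ℂ ((K'' + 2 : ℕ) : ℤ)).eval (x / 2)) = 0 →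
      True := fun _ => trivial
  have e1 : ((Polynomial.Chebyshev.U ℂ (((L' + 1 : ℕ) : ℤ))).eval (x / 2))
      = chebU x (L' + 1) := rfl
  have e2 : ((Polynomial.Chebyshev.U ℂ ((((L' + 1 : ℕ) : ℤ)) - 1)).eval (x / 2))
      = chebU x L' := by
    have : (((L' + 1 : ℕ) : ℤ)) - 1 = ((L' : ℕ) : ℤ) := by push_cast; ring
    rw [this]
    rfl
  rw [e1, e2]
  have hKK : K'' + 2 - 2 = K'' := by omega
  rw [hKK]
  ring
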